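/- For every integer k > 2 there exists an integer n > k such that every 2-coloring (red/blue) of the edges of the shift graph Sh(n,2) contains a monochromatic subgraph isomorphic to Sh(k,2). (That is, the sequence {Sh(n,2)}_{n>2} of shift graphs is a Ramsey sequence.) -/

import Mathlib

/-- Vertices of the shift graph `Sh(n, 2)`: 2-element subsets `{x₁, x₂}` of `{1, …, n}`,
encoded as ordered pairs `(x₁, x₂)` with `1 ≤ x₁ < x₂ ≤ n`. -/
def ShVert (n : ℕ) : Type :=
  {p : ℕ × ℕ // 1 ≤ p.1 ∧ p.1 < p.2 ∧ p.2 ≤ n}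

/-- The shift graph `Sh(n, 2)`: `{x₁ < x₂}` and `{y₁ < y₂}` are adjacent iff
`x₂ = y₁` or `y₂ = x₁`. -/
def ShiftGraph2 (n : ℕ) : SimpleGraph (ShVert n) where
  Adj p q := p.val.2 = q.val.1 ∨ q.val.2 = p.val.1
  symm := ⟨fun _ _ h => h.symm⟩
  loopless := ⟨by rintro ⟨⟨i, j⟩, h1, h2, h3⟩ h; dsimp at h; omega⟩

/-- `C`-monochromatic copy of `G` in `H` (as a subgraph): an injective map
preserving adjacency such that all images of edges of `G` receive the same color. -/
def HasMonoCopy {V W : Type*} (G : SimpleGraph V) (H : SimpleGraph W)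
    (C : Sym2 W → Bool) : Prop :=
  ∃ f : V → W, Function.Injective f ∧ (∀ u v, G.Adj u v → H.Adj (f u) (f v)) ∧
    ∃ c : Bool, ∀ u v, G.Adj u v → C s(f u, f v) = c

lemma myRamsey (r : ℕ) : ∀ k : ℕ, ∃ n : ℕ, ∀ S : Finset ℕ, n ≤ S.card →
    ∀ c : Finset ℕ → Bool, ∃ H, H ⊆ S ∧ H.card = k ∧
      ∃ b, ∀ T ⊆ H, T.card = r → c T = b := by
  induction r with
  | zero =>
    intro k
    refine ⟨k, fun S hS c => ?_⟩
    obtain ⟨H, hHS, hHc⟩ := Finset.exists_subset_card_eq hS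
    refine ⟨H, hHS, hHc, c ∅, fun T _ hT => ?_⟩
    rw [Finset.card_eq_zero] at hT
    rw [hT]
  | succ r IH =>
    -- prehomogeneous sequences
    have pre : ∀ m : ℕ, ∃ n : ℕ, ∀ S : Finset ℕ, n ≤ S.card →
        ∀ c : Finset ℕ → Bool, ∃ A, A ⊆ S ∧ A.card = m ∧
          ∃ g : ℕ → Bool, ∀ a ∈ A, ∀ T ⊆ A.filter (a < ·), T.card = r →
            c (insert a T) = g a := by
      intro m
      induction m with
      | zero =>
        exact ⟨0, fun S _ c => ⟨∅, Finset.empty_subset _, rfl, fun _ => false,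
          fun a ha => by simp at ha⟩⟩
      | succ m ihm =>
        obtain ⟨nm, hm⟩ := ihm
        obtain ⟨nR, hR⟩ := IH nm
        refine ⟨nR + 1, fun S hS c => ?_⟩
        have hne : S.Nonempty := Finset.card_pos.mp (by omega)
        set a := S.min' hne with ha
        have haS : a ∈ S := S.min'_mem hne
        have hgt : ∀ x ∈ S.erase a, a < x := by
          intro x hx
          have hx' := Finset.mem_of_mem_erase hx
          have := S.min'_le x hx'
          have := Finset.ne_of_mem_erase hx
          omega
        have hcard' : nR ≤ (S.erase a).card := by
          rw [Finset.card_erase_of_mem haS]; omega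
        obtain ⟨H', hH'S, hH'card, ba, hhom⟩ :=
          hR (S.erase a) hcard' (fun T => c (insert a T))
        obtain ⟨A', hA'H, hA'card, g', hg'⟩ := hm H' (le_of_eq hH'card.symm) c
        have haA' : a ∉ A' := fun h => (Finset.ne_of_mem_erase (hH'S (hA'H h))) rfl
        refine ⟨insert a A', ?_, ?_, fun x => if x = a then ba else g' x, ?_⟩
        · intro x hx
          rcases Finset.mem_insert.mp hx with h | h
          · exact h ▸ haS
          · exact Finset.mem_of_mem_erase (hH'S (hA'H h))
        · rw [Finset.card_insert_of_notMem haA', hA'card]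
        · intro a' ha' T hT hTc
          rcases Finset.mem_insert.mp ha' with h | h
          · subst h
            have hTH' : T ⊆ H' := by
              intro x hx
              have := hT hx
              rw [Finset.mem_filter, Finset.mem_insert] at this
              rcases this with ⟨h1 | h1, h2⟩
              · omega
              · exact hA'H h1
            simp only [if_pos rfl]
            exact hhom T hTH' hTc
          · have haa' : a < a' := hgt a' (hH'S (hA'H h))
            have hTA' : T ⊆ A'.filter (a' < ·) := by
              intro x hx
              have := hT hx
              rw [Finset.mem_filter, Finset.mem_insert] at this
              rcases this with ⟨h1 | h1, h2⟩
              · omega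
              · exact Finset.mem_filter.mpr ⟨h1, h2⟩
            have : a' ≠ a := by omega
            simp only [if_neg this]
            exact hg' a' h T hTA' hTc
    intro k
    obtain ⟨n, hn⟩ := pre (2 * k)
    refine ⟨n, fun S hS c => ?_⟩
    obtain ⟨A, hAS, hAcard, g, hg⟩ := hn S hS c
    have : ∃ b : Bool, k ≤ (A.filter (fun x => g x = b)).card := by
      by_contra hcon
      push_neg at hcon
      have h1 := hcon true
      have h2 := hcon false
      have := Finset.card_filter_add_card_filter_not
        (s := A) (p := fun x => g x = true)
      simp only [Bool.not_eq_true] at this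
      omega
    obtain ⟨b, hb⟩ := this
    obtain ⟨H, hHf, hHcard⟩ := Finset.exists_subset_card_eq hb
    have hHA : ∀ x ∈ H, x ∈ A ∧ g x = b := by
      intro x hx
      have := hHf hx
      rw [Finset.mem_filter] at this
      exact this
    refine ⟨H, fun x hx => hAS (hHA x hx).1, hHcard, b, ?_⟩
    intro T hT hTc
    have hTne : T.Nonempty := Finset.card_pos.mp (by omega)
    set x := T.min' hTne with hx
    have hxT : x ∈ T := T.min'_mem hTne
    have hxH := hHA x (hT hxT)
    have hTe : T.erase x ⊆ A.filter (x < ·) := by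
      intro y hy
      have hyT := Finset.mem_of_mem_erase hy
      have h1 := T.min'_le y hyT
      have h2 := Finset.ne_of_mem_erase hy
      exact Finset.mem_filter.mpr ⟨(hHA y (hT hyT)).1, by omega⟩
    have hTec : (T.erase x).card = r := by
      rw [Finset.card_erase_of_mem hxT, hTc]; omega
    have := hg x hxH.1 (T.erase x) hTe hTec
    rw [Finset.insert_erase hxT] at this
    rw [this, hxH.2]

lemma sort3 {a b c : ℕ} (hab : a < b) (hbc : b < c) :
    ({a, b, c} : Finset ℕ).sort (· ≤ ·) = [a, b, c] := by
  have hbc' : ({b, c} : Finset ℕ).sort (· ≤ ·) = [b, c] := by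
    rw [Finset.sort_insert (r := (· ≤ ·)) (fun x hx => by simp at hx; omega)
      (by simp; omega), Finset.sort_singleton]
  show Finset.sort (insert a {b, c}) (· ≤ ·) = [a, b, c]
  rw [Finset.sort_insert (r := (· ≤ ·)) (fun x hx => by simp at hx; omega)
    (by simp; omega), hbc']

lemma card3 {a b c : ℕ} (hab : a < b) (hbc : b < c) :
    ({a, b, c} : Finset ℕ).card = 3 := by
  rw [Finset.card_insert_of_notMem (by simp; omega),
    Finset.card_insert_of_notMem (by simp; omega), Finset.card_singleton]

/-- The sequence `{Sh(n, 2)}_{n > 2}` of shift graphs is a Ramsey sequence: for every `k > 2`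
there is `n > k` such that every red-blue edge coloring of `Sh(n, 2)` contains a monochromatic
subgraph isomorphic to `Sh(k, 2)`. -/
theorem shiftGraph2_ramsey_sequence (k : ℕ) (hk : 2 < k) :
    ∃ n : ℕ, n > k ∧
      ∀ C : Sym2 (ShVert n) → Bool, HasMonoCopy (ShiftGraph2 k) (ShiftGraph2 n) C := by
  obtain ⟨n₀, hn₀⟩ := myRamsey 3 k
  obtain ⟨n, hn⟩ : ∃ n : ℕ, n = n₀ + k + 1 := ⟨_, rfl⟩
  refine ⟨n, by omega, fun C => ?_⟩
  -- ordered-triple coloring induced by C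
  have col : ∃ col : ℕ → ℕ → ℕ → Bool, ∀ x y z (h : 1 ≤ x ∧ x < y ∧ y < z ∧ z ≤ n),
      col x y z = C s(⟨(x, y), h.1, h.2.1, by omega⟩, ⟨(y, z), by omega, h.2.2.1, h.2.2.2⟩) := by
    refine ⟨fun x y z => if h : 1 ≤ x ∧ x < y ∧ y < z ∧ z ≤ n then
      C s(⟨(x, y), h.1, h.2.1, by omega⟩, ⟨(y, z), by omega, h.2.2.1, h.2.2.2⟩) else false,
      fun x y z h => by simp only [dif_pos h]⟩
  obtain ⟨col, hcol⟩ := col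
  -- Finset coloring
  set c : Finset ℕ → Bool := fun T =>
    match T.sort (· ≤ ·) with
    | [x, y, z] => col x y z
    | _ => false with hc
  have hccomp : ∀ x y z : ℕ, x < y → y < z → c {x, y, z} = col x y z := by
    intro x y z h1 h2
    rw [hc]
    simp only [sort3 h1 h2]
  have hScard : n₀ ≤ (Finset.Icc 1 n).card := by
    rw [Nat.card_Icc]; omega
  obtain ⟨H, hHS, hHcard, b, hhom⟩ := hn₀ (Finset.Icc 1 n) hScard c
  have hHmem : ∀ x ∈ H, 1 ≤ x ∧ x ≤ n := by
    intro x hx; exact Finset.mem_Icc.mp (hHS hx)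
  -- the order isomorphism
  set e := H.orderIsoOfFin hHcard with he
  have hemono : ∀ i j : Fin k, i < j → (e i : ℕ) < (e j : ℕ) := by
    intro i j hij
    exact e.lt_iff_lt.mpr hij
  have hemem : ∀ i : Fin k, 1 ≤ (e i : ℕ) ∧ (e i : ℕ) ≤ n := fun i => hHmem _ (e i).2
  -- homogeneity for ordered triples in H
  have hhom' : ∀ x y z : ℕ, x ∈ H → y ∈ H → z ∈ H → x < y → y < z →
      col x y z = b := by
    intro x y z hx hy hz h1 h2
    rw [← hccomp x y z h1 h2]
    refine hhom {x, y, z} ?_ (card3 h1 h2)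
    intro w hw
    simp only [Finset.mem_insert, Finset.mem_singleton] at hw
    rcases hw with h | h | h <;> subst h <;> assumption
  -- the embedding
  have hidx : ∀ p : ShVert k, p.val.1 - 1 < k ∧ p.val.2 - 1 < k := by
    rintro ⟨⟨x, y⟩, h1, h2, h3⟩; dsimp; omega
  set f : ShVert k → ShVert n := fun p =>
    ⟨((e ⟨p.val.1 - 1, (hidx p).1⟩ : ℕ), (e ⟨p.val.2 - 1, (hidx p).2⟩ : ℕ)),
      (hemem _).1, hemono _ _ (by
        have := p.2; exact Fin.mk_lt_mk.mpr (by omega)), (hemem _).2⟩ with hf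
  have hinj : Function.Injective f := by
    rintro ⟨⟨x1, x2⟩, hx⟩ ⟨⟨y1, y2⟩, hy⟩ hfeq
    have h1 : (e ⟨x1 - 1, _⟩ : ℕ) = (e ⟨y1 - 1, _⟩ : ℕ) := congrArg (·.val.1) hfeq
    have h2 : (e ⟨x2 - 1, _⟩ : ℕ) = (e ⟨y2 - 1, _⟩ : ℕ) := congrArg (·.val.2) hfeq
    have e1 : (⟨x1 - 1, _⟩ : Fin k) = ⟨y1 - 1, _⟩ := e.injective (Subtype.ext h1)
    have e2 : (⟨x2 - 1, _⟩ : Fin k) = ⟨y2 - 1, _⟩ := e.injective (Subtype.ext h2)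
    have e1' : x1 - 1 = y1 - 1 := Fin.mk.inj_iff.mp e1
    have e2' : x2 - 1 = y2 - 1 := Fin.mk.inj_iff.mp e2
    apply Subtype.ext
    simp only [Prod.mk.injEq]
    obtain ⟨_, _, _⟩ := hx; obtain ⟨_, _, _⟩ := hy
    constructor <;> omega
  have hadj : ∀ u v : ShVert k, (ShiftGraph2 k).Adj u v → (ShiftGraph2 n).Adj (f u) (f v) := by
    rintro ⟨⟨x1, x2⟩, hx⟩ ⟨⟨y1, y2⟩, hy⟩ h
    rcases (h : _ ∨ _) with h | h
    · left
      show (e ⟨x2 - 1, _⟩ : ℕ) = (e ⟨y1 - 1, _⟩ : ℕ)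
      congr 2
      exact Fin.ext (by dsimp at h ⊢; omega)
    · right
      show (e ⟨y2 - 1, _⟩ : ℕ) = (e ⟨x1 - 1, _⟩ : ℕ)
      congr 2
      exact Fin.ext (by dsimp at h ⊢; omega)
  refine ⟨f, hinj, hadj, b, ?_⟩
  have key : ∀ u v : ShVert k, u.val.2 = v.val.1 → C s(f u, f v) = b := by
    rintro ⟨⟨x1, x2⟩, hx⟩ ⟨⟨y1, y2⟩, hy⟩ h
    dsimp at h
    subst h
    set a1 : ℕ := (e ⟨x1 - 1, (hidx ⟨(x1, x2), hx⟩).1⟩ : ℕ) with ha1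
    set a2 : ℕ := (e ⟨x2 - 1, (hidx ⟨(x1, x2), hx⟩).2⟩ : ℕ) with ha2
    set a3 : ℕ := (e ⟨y2 - 1, (hidx ⟨(x2, y2), hy⟩).2⟩ : ℕ) with ha3
    have h12 : a1 < a2 := hemono _ _ (Fin.mk_lt_mk.mpr (by obtain ⟨_,_,_⟩ := hx; omega))
    have h23 : a2 < a3 := hemono _ _ (Fin.mk_lt_mk.mpr (by obtain ⟨_,_,_⟩ := hy; omega))
    have hbound : 1 ≤ a1 ∧ a1 < a2 ∧ a2 < a3 ∧ a3 ≤ n :=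
      ⟨(hemem _).1, h12, h23, (hemem _).2⟩
    have := hcol a1 a2 a3 hbound
    have heq : C s(f ⟨(x1, x2), hx⟩, f ⟨(x2, y2), hy⟩) = col a1 a2 a3 := by
      rw [this]
    rw [heq]
    have hceq : (e ⟨x2 - 1, (hidx ⟨(x1, x2), hx⟩).2⟩ : ℕ)
        = (e ⟨x2 - 1, (hidx ⟨(x2, y2), hy⟩).1⟩ : ℕ) := rfl
    exact hhom' a1 a2 a3 (e _).2 (e _).2 (e _).2 h12 h23
  intro u v h
  rcases (h : _ ∨ _) with h | h
  · exact key u v h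
  · rw [Sym2.eq_swap]; exact key v u h
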